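/- In Mozes's numbers game on a Dynkin diagram with standard Cartan matrix (where only vertices with negative amplitude may be fired), the game is strongly convergent: if from a configuration v ∈ ℝ^I some sequence of legal moves terminates (reaching a configuration with all amplitudes nonnegative), then every maximal sequence of legal moves terminates, in the same number of moves, at the same final configuration. -/

import Mathlib

open scoped BigOperators

/-- One move of Mozes's numbers game: firing vertex `i` replaces the configuration `v` by
`f_i(v)` with `f_i(v)_j = v_j - c_{ij} v_i`. -/
def fire {I : Type*} (C : Matrix I I ℤ) (v : I → ℝ) (i : I) : I → ℝ :=
  fun j => v j - (C i j : ℝ) * v i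

/-- The result of the firing sequence `l` from configuration `v`. -/
def ngRes {I : Type*} (C : Matrix I I ℤ) (v : I → ℝ) (l : List I) : I → ℝ :=
  l.foldl (fire C) v

/-- Legality of a firing sequence: only vertices with negative amplitude may be fired. -/
def NGLegal {I : Type*} (C : Matrix I I ℤ) : (I → ℝ) → List I → Prop
  | _, [] => True
  | v, i :: t => v i < 0 ∧ NGLegal C (fire C v i) t


lemma ngRes_nil {I : Type*} (C : Matrix I I ℤ) (v : I → ℝ) : ngRes C v [] = v := rfl

lemma ngRes_cons {I : Type*} (C : Matrix I I ℤ) (v : I → ℝ) (i : I) (l : List I) :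
    ngRes C v (i :: l) = ngRes C (fire C v i) l := rfl

lemma ngRes_append {I : Type*} (C : Matrix I I ℤ) (v : I → ℝ) (l₁ l₂ : List I) :
    ngRes C v (l₁ ++ l₂) = ngRes C (ngRes C v l₁) l₂ :=
  List.foldl_append

lemma NGLegal_append {I : Type*} (C : Matrix I I ℤ) (v : I → ℝ) (l₁ l₂ : List I) :
    NGLegal C v (l₁ ++ l₂) ↔ NGLegal C v l₁ ∧ NGLegal C (ngRes C v l₁) l₂ := by
  induction l₁ generalizing v with
  | nil => simp [NGLegal, ngRes_nil]
  | cons i t ih =>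
      show (v i < 0 ∧ NGLegal C (fire C v i) (t ++ l₂)) ↔ _
      rw [ih]
      exact and_assoc.symm

/-- The key strong-convergence lemma, assuming the polygon property. -/
lemma ngKey {I : Type*} (C : Matrix I I ℤ)
    (hpoly : ∀ (v : I → ℝ) (i j : I), i ≠ j → v i < 0 → v j < 0 →
      ∃ p q : List I, NGLegal C v (i :: p) ∧ NGLegal C v (j :: q) ∧
        ngRes C v (i :: p) = ngRes C v (j :: q) ∧ p.length = q.length) :
    ∀ (n : ℕ) (v : I → ℝ) (l : List I), NGLegal C v l → (∀ i, 0 ≤ ngRes C v l i) →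
      l.length = n → ∀ l' : List I, NGLegal C v l' →
      l'.length ≤ n ∧ ∃ r : List I, NGLegal C (ngRes C v l') r ∧
        ngRes C (ngRes C v l') r = ngRes C v l ∧ l'.length + r.length = n := by
  intro n
  induction n with
  | zero =>
      intro v l hl hterm hlen l' hl'
      have hl0 : l = [] := List.length_eq_zero_iff.mp hlen
      subst hl0
      match l' with
      | [] => exact ⟨le_refl _, [], trivial, rfl, rfl⟩
      | j :: t' => exact absurd (hterm j) (not_le.mpr hl'.1)
  | succ n IH =>
      intro v l hl hterm hlen l' hl'
      match l with
      | [] => simp at hlen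
      | i :: t =>
        obtain ⟨hi, hlt⟩ := hl
        have hlent : t.length = n := by simpa using hlen
        have htermt : ∀ k, 0 ≤ ngRes C (fire C v i) t k := hterm
        match l' with
        | [] =>
            refine ⟨Nat.zero_le _, i :: t, ⟨hi, hlt⟩, rfl, by simp [hlent]⟩
        | j :: t' =>
            obtain ⟨hj, hlt'⟩ := hl'
            by_cases hji : j = i
            · subst hji
              obtain ⟨h1, r, hr1, hr2, hr3⟩ := IH (fire C v j) t hlt htermt hlent t' hlt'
              exact ⟨by simpa using Nat.succ_le_succ h1, r, hr1, hr2, by simp; omega⟩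
            · obtain ⟨p, q, hip, hjq, hres, hlpq⟩ := hpoly v i j (fun h => hji h.symm) hi hj
              obtain ⟨_, r₁, hr₁, hres₁, hlen₁⟩ :=
                IH (fire C v i) t hlt htermt hlent p hip.2
              have hq : NGLegal C (fire C v j) q := hjq.2
              have hresq : ngRes C (fire C v j) q = ngRes C (fire C v i) p := hres.symm
              have hqr₁ : NGLegal C (fire C v j) (q ++ r₁) := by
                rw [NGLegal_append]
                exact ⟨hq, by rw [hresq]; exact hr₁⟩
              have hresqr : ngRes C (fire C v j) (q ++ r₁) = ngRes C (fire C v i) t := by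
                rw [ngRes_append, hresq, hres₁]
              have htermqr : ∀ k, 0 ≤ ngRes C (fire C v j) (q ++ r₁) k := by
                rw [hresqr]; exact htermt
              have hlenqr : (q ++ r₁).length = n := by
                simp [← hlpq]; omega
              obtain ⟨ht'len, r, hr, hresr, hlenr⟩ :=
                IH (fire C v j) (q ++ r₁) hqr₁ htermqr hlenqr t' hlt'
              refine ⟨by simpa using Nat.succ_le_succ ht'len, r, hr, ?_, by simp; omega⟩
              rw [ngRes_cons, hresr, hresqr]
              rfl

section Cases
variable {I : Type*} (C : Matrix I I ℤ) (v : I → ℝ) (i j : I)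

lemma caseA1 (hii : C i i = 2) (hjj : C j j = 2) (ha : C i j = 0) (hb : C j i = 0)
    (hi : v i < 0) (hj : v j < 0) :
    NGLegal C v [i, j] ∧ NGLegal C v [j, i] ∧ ngRes C v [i, j] = ngRes C v [j, i] := by
  refine ⟨⟨hi, ?_, trivial⟩, ⟨hj, ?_, trivial⟩, ?_⟩
  · simp only [fire, ha, hb]; push_cast; linarith
  · simp only [fire, ha, hb]; push_cast; linarith
  · funext k
    simp only [ngRes, List.foldl, fire, hii, hjj, ha, hb]
    push_cast
    ring

lemma caseA2 (hii : C i i = 2) (hjj : C j j = 2) (ha : C i j = -1) (hb : C j i = -1)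
    (hi : v i < 0) (hj : v j < 0) :
    NGLegal C v [i, j, i] ∧ NGLegal C v [j, i, j] ∧
      ngRes C v [i, j, i] = ngRes C v [j, i, j] := by
  refine ⟨⟨hi, ?_, ?_, trivial⟩, ⟨hj, ?_, ?_, trivial⟩, ?_⟩
  · simp only [fire, hii, hjj, ha, hb]; push_cast; linarith
  · simp only [fire, hii, hjj, ha, hb]; push_cast; linarith
  · simp only [fire, hii, hjj, ha, hb]; push_cast; linarith
  · simp only [fire, hii, hjj, ha, hb]; push_cast; linarith
  · funext k
    simp only [ngRes, List.foldl, fire, hii, hjj, ha, hb]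
    push_cast
    ring

lemma caseB2 (hii : C i i = 2) (hjj : C j j = 2) (ha : C i j = -1) (hb : C j i = -2)
    (hi : v i < 0) (hj : v j < 0) :
    NGLegal C v [i, j, i, j] ∧ NGLegal C v [j, i, j, i] ∧
      ngRes C v [i, j, i, j] = ngRes C v [j, i, j, i] := by
  refine ⟨⟨hi, ?_, ?_, ?_, trivial⟩, ⟨hj, ?_, ?_, ?_, trivial⟩, ?_⟩ <;>
    first
    | (simp only [fire, hii, hjj, ha, hb]; push_cast; linarith)
    | (funext k; simp only [ngRes, List.foldl, fire, hii, hjj, ha, hb]; push_cast; ring)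

lemma caseG2 (hii : C i i = 2) (hjj : C j j = 2) (ha : C i j = -1) (hb : C j i = -3)
    (hi : v i < 0) (hj : v j < 0) :
    NGLegal C v [i, j, i, j, i, j] ∧ NGLegal C v [j, i, j, i, j, i] ∧
      ngRes C v [i, j, i, j, i, j] = ngRes C v [j, i, j, i, j, i] := by
  refine ⟨⟨hi, ?_, ?_, ?_, ?_, ?_, trivial⟩, ⟨hj, ?_, ?_, ?_, ?_, ?_, trivial⟩, ?_⟩ <;>
    first
    | (simp only [fire, hii, hjj, ha, hb]; push_cast; linarith)
    | (funext k; simp only [ngRes, List.foldl, fire, hii, hjj, ha, hb]; push_cast; ring)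

end Cases

/-- From positive definiteness: `C i j * C j i < 4` for `i ≠ j`. -/
lemma ngBound {I : Type*} [Fintype I] (C : Matrix I I ℤ)
    (hdiag : ∀ i, C i i = 2)
    (hfin : ∃ d : I → ℝ, (∀ i, 0 < d i) ∧ (∀ i j, d i * C i j = d j * C j i) ∧
      ∀ w : I → ℝ, w ≠ 0 → 0 < ∑ i, ∑ j, d i * (C i j : ℝ) * w i * w j)
    (i j : I) (hij : i ≠ j) : C i j * C j i ≤ 3 := by
  classical
  obtain ⟨d, hd, hsym, hpos⟩ := hfin
  set a : ℝ := (C i j : ℝ) with ha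
  set b : ℝ := (C j i : ℝ) with hb
  set w : I → ℝ := fun k => if k = i then a else if k = j then -2 else 0 with hw
  have hwi : w i = a := by simp [hw]
  have hwj : w j = -2 := by simp [hw, hij.symm]
  have hw0 : ∀ k, k ≠ i → k ≠ j → w k = 0 := by intro k h1 h2; simp [hw, h1, h2]
  have hwne : w ≠ 0 := by
    intro h
    have := congrFun h j
    rw [hwj] at this
    norm_num at this
  have hS := hpos w hwne
  have hinner : ∀ k, ∑ l, d k * (C k l : ℝ) * w k * w l
      = d k * (C k i : ℝ) * w k * w i + d k * (C k j : ℝ) * w k * w j := by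
    intro k
    refine Finset.sum_eq_add_of_mem i j (Finset.mem_univ _) (Finset.mem_univ _) hij ?_
    intro c _ ⟨h1, h2⟩
    rw [hw0 c h1 h2, mul_zero]
  have houter : (∑ k, ∑ l, d k * (C k l : ℝ) * w k * w l)
      = (∑ l, d i * (C i l : ℝ) * w i * w l) + (∑ l, d j * (C j l : ℝ) * w j * w l) := by
    refine Finset.sum_eq_add_of_mem i j (Finset.mem_univ _) (Finset.mem_univ _) hij ?_
    intro c _ ⟨h1, h2⟩
    rw [hinner, hw0 c h1 h2]
    ring
  rw [houter, hinner i, hinner j, hwi, hwj, hdiag i, hdiag j] at hS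
  push_cast at hS
  have hdj : 0 < d j := hd j
  have : (C i j : ℝ) * (C j i : ℝ) < 4 := by nlinarith
  have : ((C i j * C j i : ℤ) : ℝ) < ((4 : ℤ) : ℝ) := by push_cast; linarith
  have := Int.cast_lt.mp this
  omega

lemma ngCases (a b : ℤ) (ha : a ≤ 0) (hb : b ≤ 0) (hz : a = 0 ↔ b = 0) (h3 : a * b ≤ 3) :
    (a = 0 ∧ b = 0) ∨ (a = -1 ∧ b = -1) ∨ (a = -1 ∧ b = -2) ∨ (a = -2 ∧ b = -1) ∨
    (a = -1 ∧ b = -3) ∨ (a = -3 ∧ b = -1) := by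
  rcases eq_or_lt_of_le ha with h | h
  · left; exact ⟨h, hz.mp h⟩
  · have hb' : b < 0 := by
      rcases eq_or_lt_of_le hb with h' | h'
      · exact absurd (hz.mpr h') (by omega)
      · exact h'
    have h1 : ¬(a ≤ -2 ∧ b ≤ -2) := by rintro ⟨u1, u2⟩; nlinarith
    have h2 : -3 ≤ a := by nlinarith
    have h4 : -3 ≤ b := by nlinarith
    have h5 : a = -1 ∨ b = -1 := by omega
    rcases h5 with h5 | h5
    · subst h5; right; omega
    · subst h5; right
      have : -3 ≤ a ∧ a ≤ -1 := ⟨h2, by omega⟩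
      omega

lemma ngPolygon {I : Type*} [Fintype I] (C : Matrix I I ℤ)
    (hdiag : ∀ i, C i i = 2)
    (hoff : ∀ i j, i ≠ j → C i j ≤ 0)
    (hzero : ∀ i j, C i j = 0 ↔ C j i = 0)
    (hfin : ∃ d : I → ℝ, (∀ i, 0 < d i) ∧ (∀ i j, d i * C i j = d j * C j i) ∧
      ∀ w : I → ℝ, w ≠ 0 → 0 < ∑ i, ∑ j, d i * (C i j : ℝ) * w i * w j) :
    ∀ (v : I → ℝ) (i j : I), i ≠ j → v i < 0 → v j < 0 →
      ∃ p q : List I, NGLegal C v (i :: p) ∧ NGLegal C v (j :: q) ∧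
        ngRes C v (i :: p) = ngRes C v (j :: q) ∧ p.length = q.length := by
  intro v i j hij hi hj
  rcases ngCases (C i j) (C j i) (hoff i j hij) (hoff j i hij.symm) (hzero i j)
      (ngBound C hdiag hfin i j hij) with
    ⟨h1, h2⟩ | ⟨h1, h2⟩ | ⟨h1, h2⟩ | ⟨h1, h2⟩ | ⟨h1, h2⟩ | ⟨h1, h2⟩
  · obtain ⟨L1, L2, E⟩ := caseA1 C v i j (hdiag i) (hdiag j) h1 h2 hi hj
    exact ⟨[j], [i], L1, L2, E, rfl⟩
  · obtain ⟨L1, L2, E⟩ := caseA2 C v i j (hdiag i) (hdiag j) h1 h2 hi hj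
    exact ⟨[j, i], [i, j], L1, L2, E, rfl⟩
  · obtain ⟨L1, L2, E⟩ := caseB2 C v i j (hdiag i) (hdiag j) h1 h2 hi hj
    exact ⟨[j, i, j], [i, j, i], L1, L2, E, rfl⟩
  · obtain ⟨L1, L2, E⟩ := caseB2 C v j i (hdiag j) (hdiag i) h2 h1 hj hi
    exact ⟨[j, i, j], [i, j, i], L2, L1, E.symm, rfl⟩
  · obtain ⟨L1, L2, E⟩ := caseG2 C v i j (hdiag i) (hdiag j) h1 h2 hi hj
    exact ⟨[j, i, j, i, j], [i, j, i, j, i], L1, L2, E, rfl⟩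
  · obtain ⟨L1, L2, E⟩ := caseG2 C v j i (hdiag j) (hdiag i) h2 h1 hj hi
    exact ⟨[j, i, j, i, j], [i, j, i, j, i], L2, L1, E.symm, rfl⟩


/-- For the standard Cartan matrix of a Dynkin diagram (integral, diagonal `2`,
nonpositive off-diagonal entries vanishing symmetrically, and symmetrizable with positive
definite symmetrization, i.e. of finite type), the numbers game is strongly convergent: if
some legal sequence from `v` terminates (all amplitudes nonnegative), then every legal
sequence has length at most that of the terminating one, and every terminating legal
sequence has the same length and the same final configuration. -/
theorem stmt6 {I : Type*} [Fintype I] (C : Matrix I I ℤ)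
    (hdiag : ∀ i, C i i = 2)
    (hoff : ∀ i j, i ≠ j → C i j ≤ 0)
    (hzero : ∀ i j, C i j = 0 ↔ C j i = 0)
    (hfin : ∃ d : I → ℝ, (∀ i, 0 < d i) ∧ (∀ i j, d i * C i j = d j * C j i) ∧
      ∀ w : I → ℝ, w ≠ 0 → 0 < ∑ i, ∑ j, d i * (C i j : ℝ) * w i * w j)
    (v : I → ℝ) (l : List I) (hl : NGLegal C v l) (hterm : ∀ i, 0 ≤ ngRes C v l i) :
    ∀ l' : List I, NGLegal C v l' →
      l'.length ≤ l.length ∧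
      ((∀ i, 0 ≤ ngRes C v l' i) →
        ngRes C v l' = ngRes C v l ∧ l'.length = l.length) := by
  intro l' hl'
  obtain ⟨h1, r, hr, hres, hlen⟩ :=
    ngKey C (ngPolygon C hdiag hoff hzero hfin) l.length v l hl hterm rfl l' hl'
  refine ⟨h1, fun hterm' => ?_⟩
  match r, hr with
  | [], _ =>
      refine ⟨hres, by simpa using hlen⟩
  | x :: s, hr =>
      exact absurd (hterm' x) (not_le.mpr hr.1)
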